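/- Let Θ ⊆ ℝ^d and C ∈ [1,∞). Assume Θ is C-quasi permeable, i.e., for all x, y ∈ ℝ^d and all δ > 0, x and y can be connected by a path γ in ℝ^d with ℓ(γ) ≤ C‖y − x‖ + δ such that the closure of (image γ) ∩ Θ is countable. If Θ is contained in a closed Lebesgue nullset, then Θ is permeable. -/

import Mathlib

set_option maxHeartbeats 1000000


open Set MeasureTheory
open scoped ENNReal

/-- The length (total variation w.r.t. the Euclidean norm) of a path `γ` over `[a,b]`,
as the supremum over partitions `a = t₀ ≤ t₁ ≤ … ≤ tₙ = b` of the sums of norms of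
increments. -/
noncomputable def pathLen {d : ℕ} (γ : ℝ → EuclideanSpace ℝ (Fin d)) (a b : ℝ) : ℝ≥0∞ :=
  ⨆ n : ℕ, ⨆ t : {t : ℕ → ℝ // Monotone t ∧ t 0 = a ∧ t n = b},
    ∑ i ∈ Finset.range n, ENNReal.ofReal ‖γ (t.1 (i + 1)) - γ (t.1 i)‖

/-- `Θ ⊆ ℝ^d` is null permeable: for all `x, y` and `δ > 0` there is a path from `x` to `y`
of length at most `‖y - x‖ + δ` meeting `Θ` at most in `{x, y}`. -/
def NullPermeable {d : ℕ} (Θ : Set (EuclideanSpace ℝ (Fin d))) : Prop :=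
  ∀ x y : EuclideanSpace ℝ (Fin d), ∀ δ : ℝ, 0 < δ →
    ∃ (a b : ℝ) (γ : ℝ → EuclideanSpace ℝ (Fin d)),
      a < b ∧ ContinuousOn γ (Set.Icc a b) ∧ γ a = x ∧ γ b = y ∧
      pathLen γ a b ≤ ENNReal.ofReal (‖y - x‖ + δ) ∧
      γ '' Set.Icc a b ∩ Θ ⊆ {x, y}

/-- `Θ ⊆ ℝ^d` is permeable: for all `x, y` and `δ > 0` there is a path from `x` to `y`
of length at most `‖y - x‖ + δ` such that the closure of its intersection with `Θ`
is countable. -/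
def Permeable {d : ℕ} (Θ : Set (EuclideanSpace ℝ (Fin d))) : Prop :=
  ∀ x y : EuclideanSpace ℝ (Fin d), ∀ δ : ℝ, 0 < δ →
    ∃ (a b : ℝ) (γ : ℝ → EuclideanSpace ℝ (Fin d)),
      a < b ∧ ContinuousOn γ (Set.Icc a b) ∧ γ a = x ∧ γ b = y ∧
      pathLen γ a b ≤ ENNReal.ofReal (‖y - x‖ + δ) ∧
      (closure (γ '' Set.Icc a b ∩ Θ)).Countable

section Aux

variable {d : ℕ}

lemma edist_eq' (x y : EuclideanSpace ℝ (Fin d)) : edist x y = ENNReal.ofReal ‖x - y‖ := by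
  rw [edist_dist, dist_eq_norm]

lemma pathLen_le_eVariationOn (γ : ℝ → EuclideanSpace ℝ (Fin d)) {a b : ℝ} :
    pathLen γ a b ≤ eVariationOn γ (Icc a b) := by
  rw [pathLen]
  refine iSup_le fun n => iSup_le fun t => ?_
  obtain ⟨t, ht, ht0, htn⟩ := t
  set u : ℕ → ℝ := fun i => t (min i n) with hudef
  have hmem : ∀ i, u i ∈ Icc a b := by
    intro i
    constructor
    · rw [← ht0]; exact ht (Nat.zero_le _)
    · rw [← htn]; exact ht (min_le_right _ _)
  have hmono : Monotone u := fun i j hij => ht (min_le_min_right _ hij)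
  have heq : ∑ i ∈ Finset.range n, ENNReal.ofReal ‖γ (t (i + 1)) - γ (t i)‖
      = ∑ i ∈ Finset.range n, edist (γ (u (i + 1))) (γ (u i)) := by
    refine Finset.sum_congr rfl fun i hi => ?_
    rw [Finset.mem_range] at hi
    rw [hudef]
    simp only
    rw [min_eq_left hi.le, min_eq_left (Nat.succ_le_of_lt hi), edist_eq']
  rw [heq]
  exact eVariationOn.sum_le (f := γ) (n := n) hmono hmem

lemma eVariationOn_le_pathLen (γ : ℝ → EuclideanSpace ℝ (Fin d)) {a b : ℝ} (hab : a ≤ b) :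
    eVariationOn γ (Icc a b) ≤ pathLen γ a b := by
  rw [eVariationOn]
  refine iSup_le fun p => ?_
  obtain ⟨n, u, hu, us⟩ := p
  set t : ℕ → ℝ := fun i => if i = 0 then a else if i ≤ n + 1 then u (i - 1) else b with htdef
  have ht0 : t 0 = a := by simp [htdef]
  have htn : t (n + 2) = b := by
    simp only [htdef]
    rw [if_neg (by omega), if_neg (by omega)]
  have hmono : Monotone t := by
    apply monotone_nat_of_le_succ
    intro i
    rcases Nat.eq_zero_or_pos i with rfl | hi
    · simp only [htdef, if_pos rfl, if_neg (Nat.one_ne_zero), if_pos (by omega : 1 ≤ n + 1)]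
      exact (us 0).1
    · have hine : i ≠ 0 := Nat.pos_iff_ne_zero.mp hi
      simp only [htdef, if_neg hine, if_neg (Nat.succ_ne_zero i)]
      by_cases h1 : i + 1 ≤ n + 1
      · rw [if_pos (by omega : i ≤ n + 1), if_pos h1]
        exact hu (by omega)
      · rw [if_neg h1]
        by_cases h2 : i ≤ n + 1
        · rw [if_pos h2]
          exact (us (i - 1)).2
        · rw [if_neg h2]
  have hsum : ∑ i ∈ Finset.range n, edist (γ (u (i + 1))) (γ (u i))
      ≤ ∑ i ∈ Finset.range (n + 2), ENNReal.ofReal ‖γ (t (i + 1)) - γ (t i)‖ := by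
    have key : ∀ i ∈ Finset.range n, edist (γ (u (i + 1))) (γ (u i))
        = ENNReal.ofReal ‖γ (t (i + 1 + 1)) - γ (t (i + 1))‖ := by
      intro i hi
      rw [Finset.mem_range] at hi
      have e1 : t (i + 1 + 1) = u (i + 1) := by
        simp only [htdef]
        rw [if_neg (by omega), if_pos (by omega)]
        congr 1
      have e2 : t (i + 1) = u i := by
        simp only [htdef]
        rw [if_neg (by omega), if_pos (by omega)]
        congr 1
      rw [e1, e2, edist_eq']
    rw [Finset.sum_congr rfl key]
    calc ∑ i ∈ Finset.range n, ENNReal.ofReal ‖γ (t (i + 1 + 1)) - γ (t (i + 1))‖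
        ≤ (∑ i ∈ Finset.range n, ENNReal.ofReal ‖γ (t (i + 1 + 1)) - γ (t (i + 1))‖)
          + ENNReal.ofReal ‖γ (t 1) - γ (t 0)‖ := le_self_add
      _ = ∑ i ∈ Finset.range (n + 1), ENNReal.ofReal ‖γ (t (i + 1)) - γ (t i)‖ :=
          (Finset.sum_range_succ' (fun i => ENNReal.ofReal ‖γ (t (i + 1)) - γ (t i)‖) n).symm
      _ ≤ ∑ i ∈ Finset.range (n + 2), ENNReal.ofReal ‖γ (t (i + 1)) - γ (t i)‖ := by
          rw [Finset.sum_range_succ (fun i => ENNReal.ofReal ‖γ (t (i + 1)) - γ (t i)‖) (n + 1)]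
          exact le_self_add
  refine hsum.trans ?_
  rw [pathLen]
  exact le_iSup_of_le (n + 2) (le_iSup_of_le ⟨t, hmono, ht0, htn⟩ le_rfl)

/-- Auxiliary predicate: `x` and `y` are joined by a path on `[0,1]` with variation at most `L`
whose intersection with `Θ` has countable closure. -/
def Good (Θ : Set (EuclideanSpace ℝ (Fin d))) (x y : EuclideanSpace ℝ (Fin d)) (L : ℝ≥0∞) :
    Prop :=
  ∃ γ : ℝ → EuclideanSpace ℝ (Fin d), ContinuousOn γ (Icc 0 1) ∧ γ 0 = x ∧ γ 1 = y ∧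
    eVariationOn γ (Icc 0 1) ≤ L ∧ (closure (γ '' Icc 0 1 ∩ Θ)).Countable

lemma Good.mono' {Θ : Set (EuclideanSpace ℝ (Fin d))} {x y : EuclideanSpace ℝ (Fin d)}
    {L L' : ℝ≥0∞} (h : Good Θ x y L) (hLL : L ≤ L') : Good Θ x y L' := by
  obtain ⟨γ, h1, h2, h3, h4, h5⟩ := h
  exact ⟨γ, h1, h2, h3, h4.trans hLL, h5⟩

lemma good_refl (Θ : Set (EuclideanSpace ℝ (Fin d))) (x : EuclideanSpace ℝ (Fin d)) (L : ℝ≥0∞) :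
    Good Θ x x L := by
  refine ⟨fun _ => x, continuousOn_const, rfl, rfl, ?_, ?_⟩
  · rw [eVariationOn.constant_on]
    · exact zero_le
    · intro a ha b hb
      obtain ⟨_, _, rfl⟩ := ha
      obtain ⟨_, _, rfl⟩ := hb
      rfl
  · refine Set.Countable.mono ?_ (countable_singleton x)
    refine (closure_minimal ?_ isClosed_singleton)
    intro z hz
    obtain ⟨⟨s, _, rfl⟩, _⟩ := hz
    rfl

lemma good_trans {Θ : Set (EuclideanSpace ℝ (Fin d))} {x y z : EuclideanSpace ℝ (Fin d)}
    {L M : ℝ≥0∞} (hxy : Good Θ x y L) (hyz : Good Θ y z M) : Good Θ x z (L + M) := by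
  obtain ⟨γ₁, hc₁, h0₁, h1₁, hv₁, hcc₁⟩ := hxy
  obtain ⟨γ₂, hc₂, h0₂, h1₂, hv₂, hcc₂⟩ := hyz
  set φ₁ : ℝ → ℝ := fun s => min (max (2 * s) 0) 1 with hφ₁
  set φ₂ : ℝ → ℝ := fun s => min (max (2 * s - 1) 0) 1 with hφ₂
  have h2 : Monotone (fun s : ℝ => 2 * s) := fun a b h => by dsimp; linarith
  have h2' : Monotone (fun s : ℝ => 2 * s - 1) := fun a b h => by dsimp; linarith
  have hm₁ : Monotone φ₁ := (h2.max monotone_const).min monotone_const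
  have hm₂ : Monotone φ₂ := (h2'.max monotone_const).min monotone_const
  have hmaps₁ : ∀ s : ℝ, φ₁ s ∈ Icc (0:ℝ) 1 :=
    fun s => ⟨le_min (le_max_right _ _) zero_le_one, min_le_right _ _⟩
  have hmaps₂ : ∀ s : ℝ, φ₂ s ∈ Icc (0:ℝ) 1 :=
    fun s => ⟨le_min (le_max_right _ _) zero_le_one, min_le_right _ _⟩
  have hφ₁c : Continuous φ₁ :=
    ((continuous_const.mul continuous_id).max continuous_const).min continuous_const
  have hφ₂c : Continuous φ₂ :=
    (((continuous_const.mul continuous_id).sub continuous_const).max continuous_const).min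
      continuous_const
  set γ : ℝ → EuclideanSpace ℝ (Fin d) := fun s => if s ≤ 1/2 then γ₁ (φ₁ s) else γ₂ (φ₂ s)
    with hγ
  have hmid : γ₁ (φ₁ (1/2 : ℝ)) = γ₂ (φ₂ (1/2 : ℝ)) := by
    have e1 : φ₁ (1/2 : ℝ) = 1 := by norm_num [hφ₁]
    have e2 : φ₂ (1/2 : ℝ) = 0 := by norm_num [hφ₂]
    rw [e1, e2, h1₁, h0₂]
  have hcg₁ : ContinuousOn (fun s => γ₁ (φ₁ s)) univ :=
    hc₁.comp hφ₁c.continuousOn (fun s _ => hmaps₁ s)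
  have hcg₂ : ContinuousOn (fun s => γ₂ (φ₂ s)) univ :=
    hc₂.comp hφ₂c.continuousOn (fun s _ => hmaps₂ s)
  have hcont : Continuous γ := by
    refine continuous_if_le continuous_id continuous_const (hcg₁.mono (subset_univ _))
      (hcg₂.mono (subset_univ _)) ?_
    intro s hs
    rw [hs]
    exact hmid
  have heq₁ : EqOn γ (fun s => γ₁ (φ₁ s)) (Icc (0:ℝ) (1/2)) := by
    intro s hs
    simp only [hγ, if_pos hs.2]
  have heq₂ : EqOn γ (fun s => γ₂ (φ₂ s)) (Icc (1/2 : ℝ) 1) := by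
    intro s hs
    by_cases h : s ≤ 1/2
    · have : s = 1/2 := le_antisymm h hs.1
      subst this
      simp only [hγ, if_pos le_rfl]
      exact hmid
    · simp only [hγ, if_neg h]
  have hg0 : γ 0 = x := by
    have e : φ₁ (0:ℝ) = 0 := by norm_num [hφ₁]
    simp only [hγ, if_pos (by norm_num : (0:ℝ) ≤ 1/2), e, h0₁]
  have hg1 : γ 1 = z := by
    have e : φ₂ (1:ℝ) = 1 := by norm_num [hφ₂]
    simp only [hγ, if_neg (by norm_num : ¬ (1:ℝ) ≤ 1/2), e, h1₂]
  have hvar : eVariationOn γ (Icc 0 1) ≤ L + M := by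
    have hsplit : eVariationOn γ (Icc 0 (1/2)) + eVariationOn γ (Icc (1/2) 1)
        = eVariationOn γ (Icc 0 1) := by
      have := eVariationOn.Icc_add_Icc γ (by norm_num : (0:ℝ) ≤ 1/2)
        (by norm_num : (1/2:ℝ) ≤ 1) (mem_univ (1/2 : ℝ)) (s := univ)
      simpa using this
    rw [← hsplit]
    have hb₁ : eVariationOn γ (Icc 0 (1/2)) ≤ L := by
      rw [eVariationOn.eq_of_eqOn heq₁]
      refine le_trans ?_ hv₁
      exact eVariationOn.comp_le_of_monotoneOn γ₁ φ₁ (hm₁.monotoneOn _) (fun s _ => hmaps₁ s)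
    have hb₂ : eVariationOn γ (Icc (1/2) 1) ≤ M := by
      rw [eVariationOn.eq_of_eqOn heq₂]
      refine le_trans ?_ hv₂
      exact eVariationOn.comp_le_of_monotoneOn γ₂ φ₂ (hm₂.monotoneOn _) (fun s _ => hmaps₂ s)
    exact add_le_add hb₁ hb₂
  have himg : γ '' Icc 0 1 ⊆ γ₁ '' Icc 0 1 ∪ γ₂ '' Icc 0 1 := by
    rintro _ ⟨s, hs, rfl⟩
    by_cases h : s ≤ 1/2
    · left
      exact ⟨φ₁ s, hmaps₁ s, by simp only [hγ, if_pos h]⟩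
    · right
      exact ⟨φ₂ s, hmaps₂ s, by simp only [hγ, if_neg h]⟩
  have hcc : (closure (γ '' Icc 0 1 ∩ Θ)).Countable := by
    refine Set.Countable.mono ?_ (hcc₁.union hcc₂)
    rw [← closure_union]
    refine closure_mono ?_
    rw [← union_inter_distrib_right]
    exact inter_subset_inter_left _ himg
  exact ⟨γ, hcont.continuousOn, hg0, hg1, hvar, hcc⟩

lemma good_chain (Θ : Set (EuclideanSpace ℝ (Fin d))) (p : ℕ → EuclideanSpace ℝ (Fin d))
    (L : ℕ → ℝ≥0∞) (n : ℕ) (h : ∀ i < n, Good Θ (p i) (p (i + 1)) (L i)) :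
    Good Θ (p 0) (p n) (∑ i ∈ Finset.range n, L i) := by
  induction n with
  | zero => simpa using good_refl Θ (p 0) 0
  | succ n ih =>
    rw [Finset.sum_range_succ]
    exact good_trans (ih fun i hi => h i (hi.trans (Nat.lt_succ_self n)))
      (h n (Nat.lt_succ_self n))

lemma good_segment (Θ : Set (EuclideanSpace ℝ (Fin d))) (x w : EuclideanSpace ℝ (Fin d))
    (h : ∀ s ∈ Icc (0:ℝ) 1, x + s • w ∉ Θ) :
    Good Θ x (x + w) (ENNReal.ofReal ‖w‖) := by
  set γ : ℝ → EuclideanSpace ℝ (Fin d) := fun s => x + s • w with hγ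
  refine ⟨γ, ?_, by simp [hγ], by simp [hγ], ?_, ?_⟩
  · exact (continuous_const.add (continuous_id.smul continuous_const)).continuousOn
  · rw [eVariationOn]
    refine iSup_le fun p => ?_
    obtain ⟨n, u, hu, us⟩ := p
    have key : ∀ i, edist (γ (u (i + 1))) (γ (u i))
        = ENNReal.ofReal (u (i + 1) * ‖w‖ - u i * ‖w‖) := by
      intro i
      rw [edist_eq']
      congr 1
      have e : γ (u (i + 1)) - γ (u i) = (u (i + 1) - u i) • w := by
        simp only [hγ]
        rw [add_sub_add_left_eq_sub, ← sub_smul]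
      rw [e, norm_smul, Real.norm_eq_abs,
        abs_of_nonneg (sub_nonneg.2 (hu (Nat.le_succ i)))]
      ring
    calc ∑ i ∈ Finset.range n, edist (γ (u (i + 1))) (γ (u i))
        = ∑ i ∈ Finset.range n, ENNReal.ofReal (u (i + 1) * ‖w‖ - u i * ‖w‖) :=
          Finset.sum_congr rfl fun i _ => key i
      _ = ENNReal.ofReal (∑ i ∈ Finset.range n, (u (i + 1) * ‖w‖ - u i * ‖w‖)) :=
          (ENNReal.ofReal_sum_of_nonneg fun i _ => by
            have := hu (Nat.le_succ i)
            nlinarith [norm_nonneg w]).symm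
      _ = ENNReal.ofReal (u n * ‖w‖ - u 0 * ‖w‖) := by
          rw [Finset.sum_range_sub (fun i => u i * ‖w‖)]
      _ ≤ ENNReal.ofReal ‖w‖ := by
          apply ENNReal.ofReal_le_ofReal
          have h1 : u n ≤ 1 := (us n).2
          have h2 : 0 ≤ u 0 := (us 0).1
          nlinarith [norm_nonneg w]
  · have : γ '' Icc 0 1 ∩ Θ = ∅ := by
      refine eq_empty_iff_forall_notMem.2 ?_
      rintro z ⟨⟨s, hs, rfl⟩, hzΘ⟩
      exact h s hs hzΘ
    rw [this]
    simp

lemma good_of_path {Θ : Set (EuclideanSpace ℝ (Fin d))} {x y : EuclideanSpace ℝ (Fin d)}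
    {L : ℝ≥0∞} {a b : ℝ} {γ : ℝ → EuclideanSpace ℝ (Fin d)} (hab : a < b)
    (hc : ContinuousOn γ (Icc a b)) (ha : γ a = x) (hb : γ b = y)
    (hv : eVariationOn γ (Icc a b) ≤ L) (hcc : (closure (γ '' Icc a b ∩ Θ)).Countable) :
    Good Θ x y L := by
  set φ : ℝ → ℝ := fun s => a + s * (b - a) with hφ
  have hmono : Monotone φ := fun s t hst => by
    simp only [hφ]
    nlinarith
  have hmaps : MapsTo φ (Icc (0:ℝ) 1) (Icc a b) := by
    intro s hs
    constructor
    · simp only [hφ]; nlinarith [hs.1, hs.2, hab.le]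
    · simp only [hφ]; nlinarith [hs.1, hs.2, hab.le]
  have hφc : Continuous φ := continuous_const.add (continuous_id.mul continuous_const)
  refine ⟨γ ∘ φ, hc.comp hφc.continuousOn hmaps, ?_, ?_, ?_, ?_⟩
  · simp [hφ, ha]
  · simpa [hφ] using hb
  · exact le_trans (eVariationOn.comp_le_of_monotoneOn γ φ (hmono.monotoneOn _) hmaps) hv
  · refine Set.Countable.mono ?_ hcc
    refine closure_mono (inter_subset_inter_left _ ?_)
    rw [image_comp]
    exact image_mono (f := γ) (hmaps.image_subset)

lemma exists_small_translate (F : Set (EuclideanSpace ℝ (Fin d))) (hF : IsClosed F)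
    (hF0 : volume F = 0) (x u : EuclideanSpace ℝ (Fin d)) {ε : ℝ} (hε : 0 < ε) :
    ∃ v : EuclideanSpace ℝ (Fin d), ‖v‖ < ε ∧
      volume {t : ℝ | x + v + t • u ∈ F} = 0 := by
  set c : EuclideanSpace ℝ (Fin d) × ℝ → EuclideanSpace ℝ (Fin d) :=
    fun p => x + p.1 + p.2 • u with hc
  have hcc : Continuous c :=
    (continuous_const.add continuous_fst).add (continuous_snd.smul continuous_const)
  set A : Set (EuclideanSpace ℝ (Fin d) × ℝ) := c ⁻¹' F with hA
  have hAm : MeasurableSet A := hF.measurableSet.preimage hcc.measurable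
  have hprod : (volume : Measure (EuclideanSpace ℝ (Fin d))).prod (volume : Measure ℝ) A = 0 := by
    rw [Measure.prod_apply_symm hAm]
    have : ∀ t : ℝ, (volume : Measure (EuclideanSpace ℝ (Fin d)))
        ((fun v => (v, t)) ⁻¹' A) = 0 := by
      intro t
      have he : ((fun v => (v, t)) ⁻¹' A) = (fun v => (x + t • u) + v) ⁻¹' F := by
        ext v
        simp only [hA, hc, mem_preimage]
        have hvv : x + v + t • u = (x + t • u) + v := by abel
        rw [hvv]
      rw [he, measure_preimage_add]
      exact hF0
    simp only [this]
    simp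
  have hae := Measure.measure_ae_null_of_prod_null hprod
  have hae' : ∀ᵐ v : EuclideanSpace ℝ (Fin d), volume (Prod.mk v ⁻¹' A) = 0 := by
    filter_upwards [hae] with v hv using by simpa using hv
  set s : Set (EuclideanSpace ℝ (Fin d)) := {v | volume (Prod.mk v ⁻¹' A) = 0} with hsdef
  have hsc : volume sᶜ = 0 := by
    rw [MeasureTheory.ae_iff] at hae'
    exact hae'
  have hball : (volume : Measure (EuclideanSpace ℝ (Fin d))) (Metric.ball 0 ε) ≠ 0 :=
    (Metric.measure_ball_pos _ 0 hε).ne'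
  have hexists : (Metric.ball (0 : EuclideanSpace ℝ (Fin d)) ε ∩ s).Nonempty := by
    by_contra hne
    rw [not_nonempty_iff_eq_empty] at hne
    have hsub : Metric.ball (0 : EuclideanSpace ℝ (Fin d)) ε ⊆ sᶜ := by
      intro z hz
      intro hzs
      exact absurd (mem_inter hz hzs) (by rw [hne]; exact notMem_empty z)
    exact hball (le_antisymm ((measure_mono hsub).trans hsc.le) zero_le)
  obtain ⟨v, hvball, hvs⟩ := hexists
  refine ⟨v, by simpa using hvball, ?_⟩
  have hv0 : volume (Prod.mk v ⁻¹' A) = 0 := hvs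
  exact hv0

end Aux

/-- If `Θ ⊆ ℝ^d` is `C`-quasi permeable (any two points can be joined, for every `δ > 0`,
by a path of length at most `C‖y-x‖ + δ` whose intersection with `Θ` has countable closure)
and `Θ` is contained in a closed Lebesgue nullset, then `Θ` is permeable. -/
theorem permeable_of_quasiPermeable_subset_closed_nullset {d : ℕ}
    (Θ : Set (EuclideanSpace ℝ (Fin d))) (C : ℝ) (hC : 1 ≤ C)
    (hqp : ∀ x y : EuclideanSpace ℝ (Fin d), ∀ δ : ℝ, 0 < δ →
      ∃ (a b : ℝ) (γ : ℝ → EuclideanSpace ℝ (Fin d)),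
        a < b ∧ ContinuousOn γ (Set.Icc a b) ∧ γ a = x ∧ γ b = y ∧
        pathLen γ a b ≤ ENNReal.ofReal (C * ‖y - x‖ + δ) ∧
        (closure (γ '' Set.Icc a b ∩ Θ)).Countable)
    (hsub : ∃ F : Set (EuclideanSpace ℝ (Fin d)), IsClosed F ∧ volume F = 0 ∧ Θ ⊆ F) :
    Permeable Θ := by
  classical
  obtain ⟨F, hFc, hF0, hΘF⟩ := hsub
  have good_hqp : ∀ (x y : EuclideanSpace ℝ (Fin d)) (η : ℝ), 0 < η →
      Good Θ x y (ENNReal.ofReal (C * ‖y - x‖ + η)) := by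
    intro x y η hη
    obtain ⟨a, b, γ, hab, hcont, ha, hb, hlen, hcc⟩ := hqp x y η hη
    exact good_of_path hab hcont ha hb ((eVariationOn_le_pathLen γ hab.le).trans hlen) hcc
  have key : ∀ x y : EuclideanSpace ℝ (Fin d), ∀ δ : ℝ, 0 < δ →
      Good Θ x y (ENNReal.ofReal (‖y - x‖ + δ)) := by
    intro x y δ hδ
    rcases eq_or_ne y x with rfl | hxy
    · exact good_refl Θ y _
    -- setup
    set u : EuclideanSpace ℝ (Fin d) := y - x with hu
    have hxu : x + u = y := by rw [hu]; abel
    set ℓ : ℝ := ‖u‖ with hℓdef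
    have hℓ : 0 < ℓ := norm_pos_iff.2 (sub_ne_zero.2 hxy)
    have hC0 : 0 < C := lt_of_lt_of_le one_pos hC
    set M : ℝ := 2 * C + 3 + C * ℓ with hMdef
    have hM : 0 < M := by positivity
    set ε₀ : ℝ := δ / M with hε₀def
    have hε₀ : 0 < ε₀ := div_pos hδ hM
    obtain ⟨v, hvε, hK0⟩ := exists_small_translate F hFc hF0 x u hε₀
    set line : ℝ → EuclideanSpace ℝ (Fin d) := fun t => x + v + t • u with hline
    set K : Set ℝ := {t | x + v + t • u ∈ F} with hKdef
    have hKline : ∀ t, t ∈ K ↔ line t ∈ F := fun t => Iff.rfl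
    have hKc : IsClosed K :=
      hFc.preimage (continuous_const.add (continuous_id.smul continuous_const))
    have hK'cpt : IsCompact (K ∩ Icc 0 1) := isCompact_Icc.inter_left hKc
    have hK'0 : volume (K ∩ Icc (0:ℝ) 1) = 0 :=
      le_antisymm ((measure_mono inter_subset_left).trans hK0.le) zero_le
    obtain ⟨U, hKU, hUopen, hUvol⟩ := Set.exists_isOpen_lt_of_lt (K ∩ Icc (0:ℝ) 1)
      (ENNReal.ofReal ε₀) (by rw [hK'0]; exact ENNReal.ofReal_pos.2 hε₀)
    obtain ⟨r, hr, hthick⟩ := hK'cpt.exists_thickening_subset_open hUopen hKU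
    obtain ⟨n₀, hn₀⟩ := exists_nat_one_div_lt hr
    set N : ℕ := n₀ + 1 with hNdef
    have hNR : (0:ℝ) < N := by positivity
    have h1N : 1 / (N:ℝ) < r := by
      have : ((N:ℝ)) = (n₀:ℝ) + 1 := by push_cast [hNdef]; ring
      rw [this]
      exact hn₀
    set Bad : ℕ → Prop := fun j => ∃ t ∈ Icc ((j:ℝ)/N) (((j:ℝ)+1)/N), t ∈ K with hBad
    set B : Finset ℕ := (Finset.range N).filter Bad with hB
    -- the bad intervals sit inside U
    have hIooU : ∀ j ∈ B, Ioo ((j:ℝ)/N) (((j:ℝ)+1)/N) ⊆ U := by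
      intro j hj
      rw [hB, Finset.mem_filter, Finset.mem_range] at hj
      have hjN : j < N := hj.1
      have hbadj := hj.2
      simp only [hBad] at hbadj
      obtain ⟨t₀, ht₀I, ht₀K⟩ := hbadj
      have ht₀01 : t₀ ∈ Icc (0:ℝ) 1 := by
        constructor
        · exact le_trans (by positivity) ht₀I.1
        · refine le_trans ht₀I.2 ?_
          rw [div_le_one hNR]
          have : (j:ℝ) + 1 ≤ (N:ℝ) := by exact_mod_cast Nat.succ_le_of_lt hjN
          linarith
      intro s hs
      refine hthick ?_
      rw [Metric.mem_thickening_iff]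
      refine ⟨t₀, ⟨ht₀K, ht₀01⟩, ?_⟩
      rw [Real.dist_eq]
      have h1 : (j:ℝ)/N < s := hs.1
      have h2 : s < ((j:ℝ)+1)/N := hs.2
      have h3 : (j:ℝ)/N ≤ t₀ := ht₀I.1
      have h4 : t₀ ≤ ((j:ℝ)+1)/N := ht₀I.2
      have hwidth : ((j:ℝ)+1)/N - (j:ℝ)/N = 1/N := by ring
      rw [abs_lt]
      constructor <;> [linarith [h1N]; linarith [h1N]]
    -- cardinality bound
    have hcard : (B.card : ℝ) / N ≤ ε₀ := by
      have hdisj : (B : Set ℕ).PairwiseDisjoint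
          (fun j : ℕ => Ioo ((j:ℝ)/N) (((j:ℝ)+1)/N)) := by
        have key : ∀ i j : ℕ, i < j →
            Disjoint (Ioo ((i:ℝ)/N) (((i:ℝ)+1)/N)) (Ioo ((j:ℝ)/N) (((j:ℝ)+1)/N)) := by
          intro i j hij
          rw [Set.disjoint_left]
          rintro s ⟨hs1, hs2⟩ ⟨hs3, hs4⟩
          have : ((i:ℝ)+1) ≤ (j:ℝ) := by exact_mod_cast hij
          have : ((i:ℝ)+1)/N ≤ (j:ℝ)/N := by gcongr
          linarith
        intro i hi j hj hij
        rcases hij.lt_or_gt with h | h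
        · exact key i j h
        · exact (key j i h).symm
      have hmeas : volume (⋃ j ∈ B, Ioo ((j:ℝ)/N) (((j:ℝ)+1)/N))
          = ∑ j ∈ B, volume (Ioo ((j:ℝ)/N) (((j:ℝ)+1)/N)) :=
        measure_biUnion_finset hdisj (fun j _ => measurableSet_Ioo)
      have hIoovol : ∀ j : ℕ, volume (Ioo ((j:ℝ)/N) (((j:ℝ)+1)/N)) = ENNReal.ofReal (1/N) := by
        intro j
        rw [Real.volume_Ioo]
        congr 1
        ring
      have hsum : volume (⋃ j ∈ B, Ioo ((j:ℝ)/N) (((j:ℝ)+1)/N))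
          = ENNReal.ofReal ((B.card : ℝ) * (1/N)) := by
        rw [hmeas]
        rw [Finset.sum_congr rfl (fun j _ => hIoovol j), Finset.sum_const, nsmul_eq_mul]
        rw [← ENNReal.ofReal_natCast B.card, ← ENNReal.ofReal_mul (by positivity)]
      have hle : volume (⋃ j ∈ B, Ioo ((j:ℝ)/N) (((j:ℝ)+1)/N)) ≤ volume U :=
        measure_mono (iUnion₂_subset hIooU)
      rw [hsum] at hle
      have := (hle.trans hUvol.le)
      rw [ENNReal.ofReal_le_ofReal_iff hε₀.le] at this
      calc (B.card : ℝ) / N = (B.card : ℝ) * (1/N) := by ring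
        _ ≤ ε₀ := this
    have hcardN : (B.card : ℝ) ≤ N := by
      have : B.card ≤ N := le_trans (Finset.card_filter_le _ _) (by rw [Finset.card_range])
      exact_mod_cast this
    -- chain of points
    set p : ℕ → EuclideanSpace ℝ (Fin d) := fun i =>
      if i = 0 then x else if i ≤ N + 1 then line (((i - 1 : ℕ) : ℝ) / N) else y with hp
    have hp0 : p 0 = x := by simp [hp]
    have hpmid : ∀ j, j ≤ N → p (j + 1) = line ((j:ℝ)/N) := by
      intro j hj
      simp only [hp, if_neg (Nat.succ_ne_zero j), if_pos (by omega : j + 1 ≤ N + 1)]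
      norm_num
    have hpN2 : p (N + 2) = y := by
      simp only [hp]
      rw [if_neg (by omega), if_neg (by omega)]
    -- lengths
    set f : ℕ → ℝ := fun i => if i = 0 ∨ i = N + 1 then C * ‖v‖ + ε₀
      else if Bad (i - 1) then C * (ℓ / N) + ε₀ / N else ℓ / N with hf
    -- each piece is good
    have hgood : ∀ i < N + 2, Good Θ (p i) (p (i + 1)) (ENNReal.ofReal (f i)) := by
      intro i hi
      rcases eq_or_ne i 0 with rfl | hi0
      · -- from x to x + v
        have hval : f 0 = C * ‖v‖ + ε₀ := by simp [hf]
        have hp1 : p 1 = x + v := by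
          rw [hpmid 0 (Nat.zero_le N)]
          simp only [hline]
          norm_num
        rw [hp0, hp1, hval]
        have := good_hqp x (x + v) ε₀ hε₀
        rwa [add_sub_cancel_left] at this
      rcases eq_or_ne i (N + 1) with rfl | hiN
      · -- from y + v to y
        have hval : f (N + 1) = C * ‖v‖ + ε₀ := by simp [hf]
        have hpN1 : p (N + 1) = x + v + u := by
          rw [hpmid N le_rfl, div_self hNR.ne']
          simp only [hline, one_smul]
        rw [hpN1, hpN2, hval]
        have := good_hqp (x + v + u) y ε₀ hε₀
        have hnorm : ‖y - (x + v + u)‖ = ‖v‖ := by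
          have : y - (x + v + u) = -v := by rw [← hxu]; abel
          rw [this, norm_neg]
        rwa [hnorm] at this
      -- middle segments
      obtain ⟨j, rfl⟩ : ∃ j, i = j + 1 := ⟨i - 1, by omega⟩
      have hjN : j < N := by omega
      have hpj : p (j + 1) = line ((j:ℝ)/N) := hpmid j hjN.le
      have hpj1 : p (j + 1 + 1) = line (((j:ℝ)+1)/N) := by
        rw [hpmid (j+1) hjN]
        congr 2
        push_cast
        ring
      have hval : f (j + 1) = if Bad j then C * (ℓ / N) + ε₀ / N else ℓ / N := by
        simp only [hf, if_neg (show ¬(j + 1 = 0 ∨ j + 1 = N + 1) by omega), Nat.add_sub_cancel]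
      have hdiff : line (((j:ℝ)+1)/N) - line ((j:ℝ)/N) = (1/(N:ℝ)) • u := by
        simp only [hline]
        rw [add_sub_add_left_eq_sub, ← sub_smul]
        congr 1
        ring
      have hnorm : ‖line (((j:ℝ)+1)/N) - line ((j:ℝ)/N)‖ = ℓ / N := by
        rw [hdiff, norm_smul, Real.norm_eq_abs, abs_of_pos (by positivity : (0:ℝ) < 1/(N:ℝ))]
        rw [← hℓdef]
        ring
      rw [hpj, hpj1, hval]
      by_cases hbad : Bad j
      · rw [if_pos hbad]
        have := good_hqp (line ((j:ℝ)/N)) (line (((j:ℝ)+1)/N)) (ε₀ / N) (by positivity)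
        rwa [hnorm] at this
      · rw [if_neg hbad]
        have hseg : ∀ s ∈ Icc (0:ℝ) 1, line ((j:ℝ)/N) + s • ((1/(N:ℝ)) • u) ∉ Θ := by
          intro s hs hmem
          have harg : line ((j:ℝ)/N) + s • ((1/(N:ℝ)) • u) = line ((j:ℝ)/N + s/N) := by
            simp only [hline]
            rw [smul_smul, mul_one_div, add_assoc, ← add_smul]
          rw [harg] at hmem
          refine hbad ?_
          simp only [hBad]
          refine ⟨(j:ℝ)/N + s/N, ⟨?_, ?_⟩, hΘF hmem⟩
          · have h0s : 0 ≤ s / (N:ℝ) := div_nonneg hs.1 hNR.le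
            linarith
          · have h1s : s / (N:ℝ) ≤ 1 / (N:ℝ) := by
              gcongr
              exact hs.2
            have hw : ((j:ℝ)+1)/N = (j:ℝ)/N + 1/N := by ring
            linarith
        have hgs := good_segment Θ (line ((j:ℝ)/N)) ((1/(N:ℝ)) • u) hseg
        have hend : line ((j:ℝ)/N) + (1/(N:ℝ)) • u = line (((j:ℝ)+1)/N) := by
          simp only [hline]
          rw [add_assoc, ← add_smul]
          have : (j:ℝ)/N + 1/N = ((j:ℝ)+1)/N := by ring
          rw [this]
        have hn2 : ‖(1/(N:ℝ)) • u‖ = ℓ / N := by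
          rw [norm_smul, Real.norm_eq_abs, abs_of_pos (by positivity : (0:ℝ) < 1/(N:ℝ)),
            ← hℓdef]
          ring
        rw [hend, hn2] at hgs
        exact hgs
    -- assemble the chain
    have hchain := good_chain Θ p (fun i => ENNReal.ofReal (f i)) (N + 2) hgood
    rw [hp0, hpN2] at hchain
    have hfnonneg : ∀ i ∈ Finset.range (N + 2), 0 ≤ f i := by
      intro i _
      simp only [hf]
      split_ifs
      · positivity
      · positivity
      · positivity
    have hofsum : ∑ i ∈ Finset.range (N + 2), ENNReal.ofReal (f i)
        = ENNReal.ofReal (∑ i ∈ Finset.range (N + 2), f i) :=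
      (ENNReal.ofReal_sum_of_nonneg hfnonneg).symm
    rw [hofsum] at hchain
    refine hchain.mono' (ENNReal.ofReal_le_ofReal ?_)
    -- final arithmetic
    set Gc : Finset ℕ := (Finset.range N).filter (fun j => ¬ Bad j) with hGc
    have hf0 : f 0 = C * ‖v‖ + ε₀ := by simp [hf]
    have hfN1 : f (N + 1) = C * ‖v‖ + ε₀ := by simp [hf]
    have hsplit : ∑ i ∈ Finset.range (N + 2), f i
        = (∑ j ∈ Finset.range N, f (j + 1)) + f 0 + f (N + 1) := by
      rw [Finset.sum_range_succ f (N + 1), Finset.sum_range_succ' f N]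
    have hinner : ∑ j ∈ Finset.range N, f (j + 1)
        = (B.card : ℝ) * (C * (ℓ / N) + ε₀ / N) + (Gc.card : ℝ) * (ℓ / N) := by
      have step : ∑ j ∈ Finset.range N, f (j + 1)
          = ∑ j ∈ Finset.range N, (if Bad j then C * (ℓ / N) + ε₀ / N else ℓ / N) := by
        refine Finset.sum_congr rfl fun j hj => ?_
        rw [Finset.mem_range] at hj
        simp only [hf, if_neg (show ¬(j + 1 = 0 ∨ j + 1 = N + 1) by omega),
          Nat.add_sub_cancel]
      rw [step, Finset.sum_ite, Finset.sum_const, Finset.sum_const, nsmul_eq_mul, nsmul_eq_mul,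
        ← hB, ← hGc]
    have hGcardN : (Gc.card : ℝ) ≤ N := by
      have : Gc.card ≤ N := le_trans (Finset.card_filter_le _ _) (by rw [Finset.card_range])
      exact_mod_cast this
    have e1 : (B.card : ℝ) * (C * (ℓ / N)) ≤ ε₀ * (C * ℓ) := by
      have hre : (B.card : ℝ) * (C * (ℓ / N)) = (C * ℓ) * ((B.card : ℝ) / N) := by ring
      rw [hre]
      calc (C * ℓ) * ((B.card : ℝ) / N) ≤ (C * ℓ) * ε₀ :=
            mul_le_mul_of_nonneg_left hcard (by positivity)
        _ = ε₀ * (C * ℓ) := mul_comm _ _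
    have e2 : (B.card : ℝ) * (ε₀ / N) ≤ ε₀ := by
      have h1 : (B.card : ℝ) / N ≤ 1 := by rw [div_le_one hNR]; exact hcardN
      have hre : (B.card : ℝ) * (ε₀ / N) = ε₀ * ((B.card : ℝ) / N) := by ring
      rw [hre]
      nlinarith
    have e3 : (Gc.card : ℝ) * (ℓ / N) ≤ ℓ := by
      have h1 : (Gc.card : ℝ) / N ≤ 1 := by rw [div_le_one hNR]; exact hGcardN
      have hre : (Gc.card : ℝ) * (ℓ / N) = ℓ * ((Gc.card : ℝ) / N) := by ring
      rw [hre]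
      nlinarith
    have hCv : C * ‖v‖ ≤ C * ε₀ := mul_le_mul_of_nonneg_left hvε.le hC0.le
    have e5 : δ = 2 * (C * ε₀) + 3 * ε₀ + ε₀ * (C * ℓ) := by
      have e4 : ε₀ * M = δ := by
        rw [hε₀def]
        field_simp
      rw [← e4, hMdef]
      ring
    rw [hsplit, hinner, hf0, hfN1]
    nlinarith [e1, e2, e3, hCv, e5, hε₀]
  intro x y δ hδ
  obtain ⟨γ, hcont, h0, h1, hvar, hcc⟩ := key x y δ hδ
  exact ⟨0, 1, γ, zero_lt_one, hcont, h0, h1, (pathLen_le_eVariationOn γ).trans hvar, hcc⟩
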